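/- Let h: (a,b) → ℝ be a strictly convex differentiable function attaining its minimum at y ∈ (a,b), and let H be a polynomial whose distinct roots in (a,b) are all simple. Call a root t 'admissible' if t < y and H'(t) ≥ 0, or t ≥ y and H'(t) ≤ 0. If H has r distinct simple roots in (a,b), then the number of admissible roots is at most r/2 + 1 when r is even, and at most ⌈r/2⌉ when r is odd. -/

import Mathlib

open Polynomial Set Topology Filter

private lemma no_adj_card (n : ℕ) (A : Finset ℕ) (hA : ∀ j ∈ A, j < n)
    (hadj : ∀ j ∈ A, j + 1 ∉ A) : A.card ≤ (n + 1) / 2 := by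
  have h := Finset.card_le_card_of_injOn (f := fun j => j / 2)
    (s := A) (t := Finset.range ((n + 1) / 2))
    (by intro j hj; simp only [Finset.mem_coe, Finset.mem_range]; have := hA j hj; omega)
    (by intro j hj j' hj' hjj
        simp only at hjj
        by_contra hne
        rcases Nat.lt_or_ge j j' with hlt | hge
        · have hj1 : j' = j + 1 := by omega
          exact hadj j hj (hj1 ▸ hj')
        · have hj1 : j = j' + 1 := by omega
          exact hadj j' hj' (hj1 ▸ hj))
  simpa using h

private lemma two_blocks (n : ℕ) (A B : Finset ℕ) (hA : ∀ j ∈ A, j < n)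
    (hB : ∀ j ∈ B, j < n) (hAB : ∀ j ∈ A, ∀ j' ∈ B, j < j')
    (hadjA : ∀ j ∈ A, j + 1 ∉ A) (hadjB : ∀ j ∈ B, j + 1 ∉ B) :
    A.card + B.card ≤ n / 2 + 1 := by
  rcases A.eq_empty_or_nonempty with rfl | hAne
  · have := no_adj_card n B hB hadjB
    simp only [Finset.card_empty, zero_add]
    omega
  · set k := A.max' hAne + 1 with hk
    have hAk : ∀ j ∈ A, j < k := fun j hj => by
      have := Finset.le_max' A j hj; omega
    have hkB : ∀ j ∈ B, k ≤ j := fun j hj => by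
      have := hAB _ (A.max'_mem hAne) j hj; omega
    have hkn : k ≤ n := hA _ (A.max'_mem hAne)
    have h1 : A.card ≤ (k + 1) / 2 := no_adj_card k A hAk hadjA
    have h2 : B.card ≤ (n - k + 1) / 2 := by
      have hinj : Set.InjOn (· - k) B := by
        intro x hx y hy hxy
        have := hkB x hx; have := hkB y hy
        simp only at hxy; omega
      have hcard : (B.image (· - k)).card = B.card := Finset.card_image_of_injOn hinj
      have := no_adj_card (n - k) (B.image (· - k))
        (by intro j hj
            simp only [Finset.mem_image] at hj
            obtain ⟨x, hx, rfl⟩ := hj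
            have := hB x hx; have := hkB x hx; omega)
        (by intro j hj hj1
            simp only [Finset.mem_image] at hj hj1
            obtain ⟨x, hx, rfl⟩ := hj
            obtain ⟨z, hz, hz'⟩ := hj1
            have hx1 := hkB x hx; have hz1 := hkB z hz
            have hz2 : z = x + 1 := by omega
            exact hadjB x hx (hz2 ▸ hz))
      omega
    omega

private lemma slope_pos_right (G : Polynomial ℝ) (u : ℝ) (hu : G.eval u = 0)
    (hu' : 0 < G.derivative.eval u) (v : ℝ) (huv : u < v) :
    ∃ z ∈ Ioo u v, 0 < G.eval z := by
  have hd : HasDerivAt (fun x => G.eval x) (G.derivative.eval u) u := G.hasDerivAt u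
  rw [hasDerivAt_iff_tendsto_slope] at hd
  have hev : ∀ᶠ z in 𝓝[≠] u, 0 < slope (fun x => G.eval x) u z :=
    hd.eventually (eventually_gt_nhds hu')
  have hmono : 𝓝[>] u ≤ 𝓝[≠] u :=
    nhdsWithin_mono u (fun z hz => ne_of_gt hz)
  have hev' : ∀ᶠ z in 𝓝[>] u, 0 < slope (fun x => G.eval x) u z := hev.filter_mono hmono
  have hmem : ∀ᶠ z in 𝓝[>] u, z ∈ Ioo u v :=
    eventually_of_mem (Ioo_mem_nhdsGT huv) (fun z hz => hz)
  obtain ⟨z, hz1, hz2⟩ := (hev'.and hmem).exists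
  refine ⟨z, hz2, ?_⟩
  rw [slope_def_field] at hz1
  have hzu : 0 < z - u := sub_pos.2 hz2.1
  have : 0 < (G.eval z - G.eval u) / (z - u) := by
    simpa [div_eq_inv_mul, slope] using hz1
  rw [hu, sub_zero] at this
  exact (div_pos_iff.1 this).elim (fun h => h.1) (fun h => absurd h.2 (not_lt.2 hzu.le))

private lemma slope_pos_left (G : Polynomial ℝ) (v : ℝ) (hv : G.eval v = 0)
    (hv' : 0 < G.derivative.eval v) (w : ℝ) (hwv : w < v) :
    ∃ z ∈ Ioo w v, G.eval z < 0 := by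
  have hd : HasDerivAt (fun x => G.eval x) (G.derivative.eval v) v := G.hasDerivAt v
  rw [hasDerivAt_iff_tendsto_slope] at hd
  have hev : ∀ᶠ z in 𝓝[≠] v, 0 < slope (fun x => G.eval x) v z :=
    hd.eventually (eventually_gt_nhds hv')
  have hmono : 𝓝[<] v ≤ 𝓝[≠] v :=
    nhdsWithin_mono v (fun z hz => ne_of_lt hz)
  have hev' : ∀ᶠ z in 𝓝[<] v, 0 < slope (fun x => G.eval x) v z := hev.filter_mono hmono
  have hmem : ∀ᶠ z in 𝓝[<] v, z ∈ Ioo w v :=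
    eventually_of_mem (Ioo_mem_nhdsLT hwv) (fun z hz => hz)
  obtain ⟨z, hz1, hz2⟩ := (hev'.and hmem).exists
  refine ⟨z, hz2, ?_⟩
  have hzv : z - v < 0 := sub_neg.2 hz2.2
  have : 0 < (G.eval z - G.eval v) / (z - v) := by
    simpa [slope_def_field] using hz1
  rw [hv, sub_zero] at this
  rcases div_pos_iff.1 this with ⟨_, h⟩ | ⟨h, _⟩
  · exact absurd h (not_lt.2 hzv.le)
  · exact h

private lemma no_same_sign (G : Polynomial ℝ) (u v : ℝ) (huv : u < v)
    (hu : G.eval u = 0) (hv : G.eval v = 0)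
    (hu' : 0 < G.derivative.eval u) (hv' : 0 < G.derivative.eval v)
    (hno : ∀ x ∈ Ioo u v, G.eval x ≠ 0) : False := by
  obtain ⟨z1, hz1, hz1pos⟩ := slope_pos_right G u hu hu' v huv
  obtain ⟨z2, hz2, hz2neg⟩ := slope_pos_left G v hv hv' z1 hz1.2
  have hcont : ContinuousOn (fun x => G.eval x) (Icc z1 z2) :=
    (Polynomial.continuous G).continuousOn
  have h0 : (0 : ℝ) ∈ Ioo ((fun x => G.eval x) z2) ((fun x => G.eval x) z1) := ⟨hz2neg, hz1pos⟩
  obtain ⟨c, hc, hc0⟩ := intermediate_value_Ioo' (le_of_lt hz2.1) hcont h0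
  exact hno c ⟨lt_trans hz1.1 hc.1, lt_trans hc.2 hz2.2⟩ hc0

/-- Interval-wise node counting: let `h` be strictly convex and differentiable on
`(a,b)` with unique minimizer `y`, and let `H` be a polynomial all of whose roots in
`(a,b)` are simple; a root `t` is admissible if `t < y` and `H'(t) ≥ 0`, or `t ≥ y`
and `H'(t) ≤ 0`.  If there are `r` roots, the number of admissible ones is at most
`r/2 + 1` for even `r` and `⌈r/2⌉` for odd `r`. -/
theorem stmt15 (a b : ℝ) (hab : a < b) (h : ℝ → ℝ)
    (hconv : StrictConvexOn ℝ (Ioo a b) h)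
    (hdiff : DifferentiableOn ℝ h (Ioo a b))
    (y : ℝ) (hy : y ∈ Ioo a b) (hymin : ∀ u ∈ Ioo a b, h y ≤ h u)
    (H : Polynomial ℝ) (hH : H ≠ 0)
    (r : ℕ) (t : Fin r → ℝ) (ht : StrictMono t)
    (htI : ∀ j, t j ∈ Ioo a b)
    (hroot : ∀ j, H.eval (t j) = 0)
    (hsimple : ∀ j, H.derivative.eval (t j) ≠ 0)
    (hall : ∀ x ∈ Ioo a b, H.eval x = 0 → ∃ j, x = t j) :
    (Even r →
      (Finset.univ.filter fun j =>
          (t j < y ∧ 0 ≤ H.derivative.eval (t j)) ∨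
          (y ≤ t j ∧ H.derivative.eval (t j) ≤ 0)).card ≤ r / 2 + 1) ∧
    (Odd r →
      (Finset.univ.filter fun j =>
          (t j < y ∧ 0 ≤ H.derivative.eval (t j)) ∨
          (y ≤ t j ∧ H.derivative.eval (t j) ≤ 0)).card ≤ (r + 1) / 2) := by
  classical
  -- sign alternation at consecutive roots
  have halt : ∀ j j' : Fin r, (j : ℕ) + 1 = (j' : ℕ) →
      H.derivative.eval (t j) * H.derivative.eval (t j') < 0 := by
    intro j j' hjj'
    have hjlt : j < j' := by
      rw [Fin.lt_def]; omega
    have huv : t j < t j' := ht hjlt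
    have hno : ∀ x ∈ Ioo (t j) (t j'), H.eval x ≠ 0 := by
      intro x hx hx0
      have hxab : x ∈ Ioo a b := ⟨lt_trans (htI j).1 hx.1, lt_trans hx.2 (htI j').2⟩
      obtain ⟨m, rfl⟩ := hall x hxab hx0
      have h1 : j < m := ht.lt_iff_lt.1 hx.1
      have h2 : m < j' := ht.lt_iff_lt.1 hx.2
      rw [Fin.lt_def] at h1 h2
      omega
    rcases (hsimple j).lt_or_gt with hj' | hj' <;>
      rcases (hsimple j').lt_or_gt with hj'' | hj''
    · exfalso
      apply no_same_sign (-H) (t j) (t j') huv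
        (by simp [hroot j]) (by simp [hroot j'])
        (by simp only [derivative_neg, eval_neg]; linarith)
        (by simp only [derivative_neg, eval_neg]; linarith)
      intro x hx hx0
      exact hno x hx (by simpa using hx0)
    · exact mul_neg_of_neg_of_pos hj' hj''
    · exact mul_neg_of_pos_of_neg hj' hj''
    · exact absurd (no_same_sign H (t j) (t j') huv (hroot j) (hroot j') hj' hj'' hno) id
  set P1 : Fin r → Prop := fun j => t j < y ∧ 0 ≤ H.derivative.eval (t j) with hP1
  set P2 : Fin r → Prop := fun j => y ≤ t j ∧ H.derivative.eval (t j) ≤ 0 with hP2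
  have hsplit : (Finset.univ.filter fun j =>
        (t j < y ∧ 0 ≤ H.derivative.eval (t j)) ∨
        (y ≤ t j ∧ H.derivative.eval (t j) ≤ 0)).card
      = (Finset.univ.filter P1).card + (Finset.univ.filter P2).card := by
    rw [Finset.filter_or, Finset.card_union_of_disjoint]
    rw [Finset.disjoint_filter]
    intro j _ hj1 hj2
    exact absurd hj2.1 (not_le.2 hj1.1)
  set A : Finset ℕ := (Finset.univ.filter P1).image Fin.val with hA
  set B : Finset ℕ := (Finset.univ.filter P2).image Fin.val with hB
  have hAcard : A.card = (Finset.univ.filter P1).card :=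
    Finset.card_image_of_injective _ Fin.val_injective
  have hBcard : B.card = (Finset.univ.filter P2).card :=
    Finset.card_image_of_injective _ Fin.val_injective
  have hmemA : ∀ n : ℕ, n ∈ A ↔ ∃ j : Fin r, P1 j ∧ (j : ℕ) = n := by
    intro n; simp [hA, Finset.mem_image, Finset.mem_filter, and_comm]
  have hmemB : ∀ n : ℕ, n ∈ B ↔ ∃ j : Fin r, P2 j ∧ (j : ℕ) = n := by
    intro n; simp [hB, Finset.mem_image, Finset.mem_filter, and_comm]
  have hbound : A.card + B.card ≤ r / 2 + 1 := by
    apply two_blocks r A B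
    · intro n hn; obtain ⟨j, _, rfl⟩ := (hmemA n).1 hn; exact j.isLt
    · intro n hn; obtain ⟨j, _, rfl⟩ := (hmemB n).1 hn; exact j.isLt
    · intro n hn n' hn'
      obtain ⟨j, hj, rfl⟩ := (hmemA n).1 hn
      obtain ⟨j', hj', rfl⟩ := (hmemB n').1 hn'
      have : t j < t j' := lt_of_lt_of_le hj.1 hj'.1
      have := ht.lt_iff_lt.1 this
      rwa [Fin.lt_def] at this
    · intro n hn hn1
      obtain ⟨j, hj, rfl⟩ := (hmemA n).1 hn
      obtain ⟨j', hj', hjj'⟩ := (hmemA _).1 hn1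
      have hp1 : 0 < H.derivative.eval (t j) := lt_of_le_of_ne hj.2 (Ne.symm (hsimple j))
      have hp2 : 0 < H.derivative.eval (t j') := lt_of_le_of_ne hj'.2 (Ne.symm (hsimple j'))
      exact absurd (halt j j' (by omega)) (not_lt.2 (mul_pos hp1 hp2).le)
    · intro n hn hn1
      obtain ⟨j, hj, rfl⟩ := (hmemB n).1 hn
      obtain ⟨j', hj', hjj'⟩ := (hmemB _).1 hn1
      have hp1 : H.derivative.eval (t j) < 0 := lt_of_le_of_ne hj.2 (hsimple j)
      have hp2 : H.derivative.eval (t j') < 0 := lt_of_le_of_ne hj'.2 (hsimple j')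
      exact absurd (halt j j' (by omega)) (not_lt.2 (mul_pos_of_neg_of_neg hp1 hp2).le)
  constructor
  · intro _; omega
  · intro hodd
    obtain ⟨m, rfl⟩ := hodd
    omega
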